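/- Let K > 0 and ε ≠ 0 be real numbers and let D be a nonempty open subset of {(ρ,z) ∈ ℝ² : ρ > 0}. Then there exists no pair of twice continuously differentiable functions ψ, γ : D → ℝ satisfying simultaneously on D the four equations: ψ_ρ² + ψ_z² + γ_ρρ + γ_zz − 2(ψ_ρρ + ψ_ρ/ρ + ψ_zz) = K ε e^{2γ−2ψ}, γ_ρ = ρ(ψ_ρ² − ψ_z²), γ_z = 2ρψ_ρψ_z, and ψ_ρ² + ψ_z² + γ_ρρ + γ_zz = 0. -/

import Mathlib

/-- Partial derivative with respect to the first coordinate `ρ`. -/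
noncomputable def dρ (f : ℝ × ℝ → ℝ) (p : ℝ × ℝ) : ℝ := fderiv ℝ f p (1, 0)

/-- Partial derivative with respect to the second coordinate `z`. -/
noncomputable def dz (f : ℝ × ℝ → ℝ) (p : ℝ × ℝ) : ℝ := fderiv ℝ f p (0, 1)

private lemma diff_dcoord {f : ℝ × ℝ → ℝ} {q : ℝ × ℝ} (hf : ContDiffAt ℝ 2 f q) (v : ℝ × ℝ) :
    DifferentiableAt ℝ (fun p => fderiv ℝ f p v) q :=
  ((hf.fderiv_right (le_refl 2)).differentiableAt one_ne_zero).clm_apply (differentiableAt_const v)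

private lemma derivAt_coord {f : ℝ × ℝ → ℝ} {q : ℝ × ℝ} (hf : ContDiffAt ℝ 2 f q)
    (v w : ℝ × ℝ) :
    fderiv ℝ (fun p => fderiv ℝ f p v) q w = fderiv ℝ (fderiv ℝ f) q w v := by
  have h1 : DifferentiableAt ℝ (fderiv ℝ f) q :=
    (hf.fderiv_right (le_refl 2)).differentiableAt one_ne_zero
  rw [fderiv_clm_apply h1 (differentiableAt_const v)]
  simp

private lemma symm_coord {f : ℝ × ℝ → ℝ} {q : ℝ × ℝ} (hf : ContDiffAt ℝ 2 f q) :
    dz (dρ f) q = dρ (dz f) q := by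
  have hs := hf.isSymmSndFDerivAt (by simp)
  show fderiv ℝ (fun p => fderiv ℝ f p (1, 0)) q (0, 1)
      = fderiv ℝ (fun p => fderiv ℝ f p (0, 1)) q (1, 0)
  rw [derivAt_coord hf, derivAt_coord hf, hs]

private lemma fderiv_congr_open {f g : ℝ × ℝ → ℝ} {D : Set (ℝ × ℝ)} (hDo : IsOpen D)
    {q : ℝ × ℝ} (hq : q ∈ D) (h : ∀ p ∈ D, f p = g p) :
    fderiv ℝ f q = fderiv ℝ g q :=
  Filter.EventuallyEq.fderiv_eq (Filter.eventuallyEq_of_mem (hDo.mem_nhds hq) h)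

private lemma d_zero_of_eqOn_zero {f : ℝ × ℝ → ℝ} {D : Set (ℝ × ℝ)} (hDo : IsOpen D)
    {q : ℝ × ℝ} (hq : q ∈ D) (h : ∀ p ∈ D, f p = 0) (v : ℝ × ℝ) :
    fderiv ℝ f q v = 0 := by
  have : fderiv ℝ f q = fderiv ℝ (fun _ => (0 : ℝ)) q := fderiv_congr_open hDo hq h
  rw [this, fderiv_fun_const]
  simp

private lemma d_mul {a b : ℝ × ℝ → ℝ} {q : ℝ × ℝ} (v : ℝ × ℝ)
    (ha : DifferentiableAt ℝ a q) (hb : DifferentiableAt ℝ b q) :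
    fderiv ℝ (fun p => a p * b p) q v
      = a q * fderiv ℝ b q v + b q * fderiv ℝ a q v := by
  rw [fderiv_fun_mul ha hb]
  simp

private lemma d_fst (q v : ℝ × ℝ) : fderiv ℝ (fun p : ℝ × ℝ => p.1) q v = v.1 := by
  rw [show (fun p : ℝ × ℝ => p.1) = Prod.fst from rfl, fderiv_fst]
  rfl

private lemma d_sq {a : ℝ × ℝ → ℝ} {q : ℝ × ℝ} (v : ℝ × ℝ) (ha : DifferentiableAt ℝ a q) :
    fderiv ℝ (fun p => a p ^ 2) q v = 2 * a q * fderiv ℝ a q v := by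
  have : (fun p => a p ^ 2) = fun p => a p * a p := by funext p; ring
  rw [this, d_mul v ha ha]
  ring

/-- derivative of the right-hand side of equation (2). -/
private lemma d_rhs2 {a b : ℝ × ℝ → ℝ} {q : ℝ × ℝ} (v : ℝ × ℝ)
    (ha : DifferentiableAt ℝ a q) (hb : DifferentiableAt ℝ b q) :
    fderiv ℝ (fun p => p.1 * (a p ^ 2 - b p ^ 2)) q v
      = v.1 * (a q ^ 2 - b q ^ 2)
        + q.1 * (2 * a q * fderiv ℝ a q v - 2 * b q * fderiv ℝ b q v) := by
  have h1 : DifferentiableAt ℝ (fun p => a p ^ 2 - b p ^ 2) q := (ha.pow 2).sub (hb.pow 2)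
  rw [d_mul v differentiableAt_fst h1, fderiv_fun_sub (f := fun p => a p ^ 2) (g := fun p => b p ^ 2) (ha.pow 2) (hb.pow 2)]
  simp only [ContinuousLinearMap.sub_apply]
  rw [d_sq v ha, d_sq v hb, d_fst]
  ring

/-- derivative of the right-hand side of equation (3). -/
private lemma d_rhs3 {a b : ℝ × ℝ → ℝ} {q : ℝ × ℝ} (v : ℝ × ℝ)
    (ha : DifferentiableAt ℝ a q) (hb : DifferentiableAt ℝ b q) :
    fderiv ℝ (fun p => 2 * p.1 * a p * b p) q v
      = 2 * (v.1 * (a q * b q) + q.1 * (fderiv ℝ a q v * b q + a q * fderiv ℝ b q v)) := by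
  have hab : DifferentiableAt ℝ (fun p => a p * b p) q := ha.mul hb
  have hfab : DifferentiableAt ℝ (fun p : ℝ × ℝ => p.1 * (a p * b p)) q :=
    differentiableAt_fst.mul hab
  have : (fun p : ℝ × ℝ => 2 * p.1 * a p * b p)
      = fun p : ℝ × ℝ => 2 * (p.1 * (a p * b p)) := by funext p; ring
  rw [this, fderiv_const_mul hfab 2]
  simp only [ContinuousLinearMap.smul_apply, smul_eq_mul]
  rw [d_mul v differentiableAt_fst hab, d_mul v ha hb, d_fst]
  ring

theorem no_hydrostatic_solution
    (K ε : ℝ) (hK : 0 < K) (hε : ε ≠ 0)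
    (D : Set (ℝ × ℝ)) (hDhalf : D ⊆ {p : ℝ × ℝ | 0 < p.1})
    (hDo : IsOpen D) (hDne : D.Nonempty) :
    ¬∃ ψ γ : ℝ × ℝ → ℝ,
      ContDiffOn ℝ 2 ψ D ∧ ContDiffOn ℝ 2 γ D ∧
      (∀ q ∈ D, (dρ ψ q) ^ 2 + (dz ψ q) ^ 2 + dρ (dρ γ) q + dz (dz γ) q
          - 2 * (dρ (dρ ψ) q + dρ ψ q / q.1 + dz (dz ψ) q)
        = K * ε * Real.exp (2 * γ q - 2 * ψ q)) ∧
      (∀ q ∈ D, dρ γ q = q.1 * ((dρ ψ q) ^ 2 - (dz ψ q) ^ 2)) ∧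
      (∀ q ∈ D, dz γ q = 2 * q.1 * dρ ψ q * dz ψ q) ∧
      (∀ q ∈ D, (dρ ψ q) ^ 2 + (dz ψ q) ^ 2 + dρ (dρ γ) q + dz (dz γ) q = 0) := by
  rintro ⟨ψ, γ, hψ, hγ, e1, e2, e3, e4⟩
  obtain ⟨p₀, hp₀⟩ := hDne
  have hψat : ∀ q ∈ D, ContDiffAt ℝ 2 ψ q := fun q hq => hψ.contDiffAt (hDo.mem_nhds hq)
  have hγat : ∀ q ∈ D, ContDiffAt ℝ 2 γ q := fun q hq => hγ.contDiffAt (hDo.mem_nhds hq)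
  have hρpos : ∀ q ∈ D, 0 < q.1 := fun q hq => hDhalf hq
  have hdψρ : ∀ q ∈ D, DifferentiableAt ℝ (dρ ψ) q :=
    fun q hq => diff_dcoord (hψat q hq) (1, 0)
  have hdψz : ∀ q ∈ D, DifferentiableAt ℝ (dz ψ) q :=
    fun q hq => diff_dcoord (hψat q hq) (0, 1)
  -- the "Laplacian" of ψ is nonzero everywhere on D
  have hLne : ∀ q ∈ D, dρ (dρ ψ) q + dρ ψ q / q.1 + dz (dz ψ) q ≠ 0 := by
    intro q hq hL0
    have h1 := e1 q hq
    have h4 := e4 q hq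
    have : K * ε * Real.exp (2 * γ q - 2 * ψ q) = 0 := by linarith
    rcases mul_eq_zero.1 this with h | h
    · rcases mul_eq_zero.1 h with h | h
      · exact hK.ne' h
      · exact hε h
    · exact (Real.exp_pos _).ne' h
  -- Step 1: dρ ψ vanishes on D
  have hψρ0 : ∀ q ∈ D, dρ ψ q = 0 := by
    intro q hq
    have hA : dρ (dρ γ) q
        = (1 : ℝ) * (dρ ψ q ^ 2 - dz ψ q ^ 2)
          + q.1 * (2 * dρ ψ q * dρ (dρ ψ) q - 2 * dz ψ q * dρ (dz ψ) q) := by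
      have hc : fderiv ℝ (dρ γ) q
          = fderiv ℝ (fun p => p.1 * ((dρ ψ p) ^ 2 - (dz ψ p) ^ 2)) q :=
        fderiv_congr_open hDo hq e2
      show fderiv ℝ (dρ γ) q (1, 0) = _
      rw [hc, d_rhs2 (1, 0) (hdψρ q hq) (hdψz q hq)]; rfl
    have hB : dz (dz γ) q
        = 2 * ((0 : ℝ) * (dρ ψ q * dz ψ q)
          + q.1 * (dz (dρ ψ) q * dz ψ q + dρ ψ q * dz (dz ψ) q)) := by
      have hc : fderiv ℝ (dz γ) q
          = fderiv ℝ (fun p => 2 * p.1 * dρ ψ p * dz ψ p) q :=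
        fderiv_congr_open hDo hq e3
      show fderiv ℝ (dz γ) q (0, 1) = _
      rw [hc, d_rhs3 (0, 1) (hdψρ q hq) (hdψz q hq)]; rfl
    have h4 := e4 q hq
    rw [hA, hB, symm_coord (hψat q hq)] at h4
    have key : q.1 * (dρ ψ q
        * (dρ (dρ ψ) q + dρ ψ q / q.1 + dz (dz ψ) q)) = 0 := by
      have hne : q.1 ≠ 0 := (hρpos q hq).ne'
      field_simp
      nlinarith [h4]
    rcases mul_eq_zero.1 key with h | h
    · exact absurd h (hρpos q hq).ne'
    · rcases mul_eq_zero.1 h with h | h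
      · exact h
      · exact absurd h (hLne q hq)
  -- Step 2: second derivatives of dρ ψ vanish on D
  have hψρρ0 : ∀ q ∈ D, dρ (dρ ψ) q = 0 :=
    fun q hq => d_zero_of_eqOn_zero hDo hq hψρ0 (1, 0)
  have hψρz0 : ∀ q ∈ D, dρ (dz ψ) q = 0 := by
    intro q hq
    rw [← symm_coord (hψat q hq)]
    exact d_zero_of_eqOn_zero hDo hq hψρ0 (0, 1)
  -- hence L = dz (dz ψ) ≠ 0 on D
  have hzzne : ∀ q ∈ D, dz (dz ψ) q ≠ 0 := by
    intro q hq
    have := hLne q hq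
    rw [hψρρ0 q hq, hψρ0 q hq] at this
    simpa using this
  -- Step 3: dz γ vanishes on D, hence so does dρ (dz γ) = dz (dρ γ)
  have hγz0 : ∀ q ∈ D, dz γ q = 0 := by
    intro q hq
    rw [e3 q hq, hψρ0 q hq]
    ring
  -- Step 4: dz ψ vanishes on D
  have hψz0 : ∀ q ∈ D, dz ψ q = 0 := by
    intro q hq
    have hzργ : dz (dρ γ) q = 0 := by
      rw [symm_coord (hγat q hq)]
      exact d_zero_of_eqOn_zero hDo hq hγz0 (1, 0)
    have hC : dz (dρ γ) q
        = (0 : ℝ) * (dρ ψ q ^ 2 - dz ψ q ^ 2)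
          + q.1 * (2 * dρ ψ q * dz (dρ ψ) q - 2 * dz ψ q * dz (dz ψ) q) := by
      have hc : fderiv ℝ (dρ γ) q
          = fderiv ℝ (fun p => p.1 * ((dρ ψ p) ^ 2 - (dz ψ p) ^ 2)) q :=
        fderiv_congr_open hDo hq e2
      show fderiv ℝ (dρ γ) q (0, 1) = _
      rw [hc, d_rhs2 (0, 1) (hdψρ q hq) (hdψz q hq)]; rfl
    rw [hC, hψρ0 q hq] at hzργ
    have : dz ψ q * dz (dz ψ) q = 0 := by
      have hne : q.1 ≠ 0 := (hρpos q hq).ne'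
      have : q.1 * (dz ψ q * dz (dz ψ) q) = 0 := by linarith [hzργ]
      rcases mul_eq_zero.1 this with h | h
      · exact absurd h hne
      · exact h
    rcases mul_eq_zero.1 this with h | h
    · exact h
    · exact absurd h (hzzne q hq)
  -- Step 5: contradiction at p₀
  exact hzzne p₀ hp₀ (d_zero_of_eqOn_zero hDo hp₀ hψz0 (0, 1))
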